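/- Let μ̃ be the bilinear skew-symmetric map on ℝ^7 with nonzero basis brackets [e1,e2]=(2√4305/861)e3+(√111930/1722)e4, [e1,e3]=(2√22386/861)e5, [e1,e4]=(5√861/1722)e5, [e1,e5]=(√902/82)e6, [e1,e6]=(√82/41)e7, [e2,e4]=(√861/82)e7. Then μ̃ satisfies the Jacobi identity, D = diag(1,3,4,4,5,6,7) is a derivation of (ℝ^7,μ̃), and m(μ̃) = -(38/41)·Id + (15/82)·D; in particular m(μ̃) = diag(-61/82,-31/82,-8/41,-8/41,-1/82,7/41,29/82). -/
import Mathlib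


open Finset

noncomputable section

/-- `ℝ⁷` with its standard basis and standard inner product. -/
abbrev V7 : Type := Fin 7 → ℝ

/-- The standard basis vector `e i`. -/
def e (i : Fin 7) : V7 := Pi.single i 1

/-- The standard inner product on `ℝ⁷`. -/
def dot (x y : V7) : ℝ := ∑ i, x i * y i

/-- Structure constants built from a list of entries `(i, j, k, a)`, each meaning that
`μ (e i) (e j)` has component `a` along `e k` (and `μ (e j) (e i)` has component `-a`);
all unlisted basis brackets are `0`. -/
def toC (L : List (Fin 7 × Fin 7 × Fin 7 × ℝ)) (i j k : Fin 7) : ℝ :=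
  (L.map fun t =>
      (if t.1 = i ∧ t.2.1 = j ∧ t.2.2.1 = k then t.2.2.2 else 0)
    - (if t.1 = j ∧ t.2.1 = i ∧ t.2.2.1 = k then t.2.2.2 else 0)).sum

/-- The bilinear skew-symmetric map on `ℝ⁷` with structure constants `c`. -/
def br (c : Fin 7 → Fin 7 → Fin 7 → ℝ) (x y : V7) : V7 :=
  fun k => ∑ i, ∑ j, x i * y j * c i j k

lemma br_add_left (c : Fin 7 → Fin 7 → Fin 7 → ℝ) (x x' y : V7) :
    br c (x + x') y = br c x y + br c x' y := by
  funext k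
  simp only [br, Pi.add_apply, ← Finset.sum_add_distrib]
  exact Finset.sum_congr rfl fun i _ => Finset.sum_congr rfl fun j _ => by ring

lemma br_smul_left (c : Fin 7 → Fin 7 → Fin 7 → ℝ) (r : ℝ) (x y : V7) :
    br c (r • x) y = r • br c x y := by
  funext k
  simp only [br, Pi.smul_apply, smul_eq_mul, Finset.mul_sum]
  exact Finset.sum_congr rfl fun i _ => Finset.sum_congr rfl fun j _ => by ring

lemma br_add_right (c : Fin 7 → Fin 7 → Fin 7 → ℝ) (x y y' : V7) :
    br c x (y + y') = br c x y + br c x y' := by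
  funext k
  simp only [br, Pi.add_apply, ← Finset.sum_add_distrib]
  exact Finset.sum_congr rfl fun i _ => Finset.sum_congr rfl fun j _ => by ring

lemma br_smul_right (c : Fin 7 → Fin 7 → Fin 7 → ℝ) (r : ℝ) (x y : V7) :
    br c x (r • y) = r • br c x y := by
  funext k
  simp only [br, Pi.smul_apply, smul_eq_mul, Finset.mul_sum]
  exact Finset.sum_congr rfl fun i _ => Finset.sum_congr rfl fun j _ => by ring

lemma br_zero_left (c : Fin 7 → Fin 7 → Fin 7 → ℝ) (y : V7) : br c 0 y = 0 := by
  funext k; simp [br]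

lemma br_zero_right (c : Fin 7 → Fin 7 → Fin 7 → ℝ) (x : V7) : br c x 0 = 0 := by
  funext k; simp [br]

/-- The space of derivations of the algebra `(ℝ⁷, br c)`, i.e. the linear maps `D` with
`D (μ x y) = μ (D x) y + μ x (D y)` for all `x, y`, as a submodule of the endomorphisms. -/
def derivations (c : Fin 7 → Fin 7 → Fin 7 → ℝ) : Submodule ℝ (Module.End ℝ V7) where
  carrier := {D | ∀ x y, D (br c x y) = br c (D x) y + br c x (D y)}
  add_mem' := by
    intro D E hD hE x y
    simp only [LinearMap.add_apply, hD x y, hE x y, br_add_left, br_add_right]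
    abel
  zero_mem' := by
    intro x y
    simp [br_zero_left, br_zero_right]
  smul_mem' := by
    intro r D hD x y
    simp only [LinearMap.smul_apply, hD x y, smul_add, br_smul_left, br_smul_right]

/-- The Jacobi identity for the bracket `br c`. -/
def Jacobi (c : Fin 7 → Fin 7 → Fin 7 → ℝ) : Prop :=
  ∀ x y z : V7, br c (br c x y) z + br c (br c y z) x + br c (br c z x) y = 0

/-- Skew-symmetry of the bracket `br c`. -/
def Skew (c : Fin 7 → Fin 7 → Fin 7 → ℝ) : Prop :=
  ∀ x y : V7, br c x y = - br c y x

/-- The diagonal endomorphism `diag (a 1, …, a 7)` of `ℝ⁷`, `e i ↦ a i • e i`. -/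
def diagL (a : Fin 7 → ℝ) : Module.End ℝ V7 :=
  LinearMap.pi fun i => a i • LinearMap.proj i

/-- Structure constants of the bracket `μ̃`. -/
def c14 : Fin 7 → Fin 7 → Fin 7 → ℝ :=
  toC [(0, 1, 2, 2 * Real.sqrt 4305 / 861),
   (0, 1, 3, Real.sqrt 111930 / 1722),
   (0, 2, 4, 2 * Real.sqrt 22386 / 861),
   (0, 3, 4, 5 * Real.sqrt 861 / 1722),
   (0, 4, 5, Real.sqrt 902 / 82),
   (0, 5, 6, Real.sqrt 82 / 41),
   (1, 3, 6, Real.sqrt 861 / 82)]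


lemma b0 (x y : V7) : br c14 x y 0 = 0 := by
  simp [br, c14, toC, Fin.sum_univ_seven]
lemma b1 (x y : V7) : br c14 x y 1 = 0 := by
  simp [br, c14, toC, Fin.sum_univ_seven]
lemma b2 (x y : V7) : br c14 x y 2 =
    (2 * Real.sqrt 4305 / 861) * (x 0 * y 1 - x 1 * y 0) := by
  simp [br, c14, toC, Fin.sum_univ_seven]; ring
lemma b3 (x y : V7) : br c14 x y 3 =
    (Real.sqrt 111930 / 1722) * (x 0 * y 1 - x 1 * y 0) := by
  simp [br, c14, toC, Fin.sum_univ_seven]; ring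
lemma b4 (x y : V7) : br c14 x y 4 =
    (2 * Real.sqrt 22386 / 861) * (x 0 * y 2 - x 2 * y 0)
    + (5 * Real.sqrt 861 / 1722) * (x 0 * y 3 - x 3 * y 0) := by
  simp [br, c14, toC, Fin.sum_univ_seven]; ring
lemma b5 (x y : V7) : br c14 x y 5 =
    (Real.sqrt 902 / 82) * (x 0 * y 4 - x 4 * y 0) := by
  simp [br, c14, toC, Fin.sum_univ_seven]; ring
lemma b6 (x y : V7) : br c14 x y 6 =
    (Real.sqrt 82 / 41) * (x 0 * y 5 - x 5 * y 0)
    + (Real.sqrt 861 / 82) * (x 1 * y 3 - x 3 * y 1) := by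
  simp [br, c14, toC, Fin.sum_univ_seven]; ring

lemma skew14 : Skew c14 := by
  intro x y
  funext k
  fin_cases k <;>
    simp only [Fin.mk_zero, Fin.mk_one, Fin.reduceFinMk, Pi.neg_apply, b0, b1, b2, b3, b4, b5, b6, neg_zero] <;> ring

lemma jac14 : Jacobi c14 := by
  intro x y z
  funext k
  fin_cases k <;>
    simp only [Fin.mk_zero, Fin.mk_one, Fin.reduceFinMk, Pi.add_apply, Pi.zero_apply, b0, b1, b2, b3, b4, b5, b6] <;> ring

lemma diagL_apply (a : Fin 7 → ℝ) (v : V7) (i : Fin 7) : diagL a v i = a i * v i := rfl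

lemma deriv14 : diagL ![1, 3, 4, 4, 5, 6, 7] ∈ derivations c14 := by
  intro x y
  funext k
  fin_cases k <;>
    simp only [Fin.mk_zero, Fin.mk_one, Fin.reduceFinMk, Pi.add_apply, diagL_apply,
      b0, b1, b2, b3, b4, b5, b6, show ((![1,3,4,4,5,6,7] : Fin 7 → ℝ) 0) = 1 from rfl,
      show ((![1,3,4,4,5,6,7] : Fin 7 → ℝ) 1) = 3 from rfl,
      show ((![1,3,4,4,5,6,7] : Fin 7 → ℝ) 2) = 4 from rfl,
      show ((![1,3,4,4,5,6,7] : Fin 7 → ℝ) 3) = 4 from rfl,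
      show ((![1,3,4,4,5,6,7] : Fin 7 → ℝ) 4) = 5 from rfl,
      show ((![1,3,4,4,5,6,7] : Fin 7 → ℝ) 5) = 6 from rfl,
      show ((![1,3,4,4,5,6,7] : Fin 7 → ℝ) 6) = 7 from rfl] <;> ring

lemma dot_e (v : V7) (l : Fin 7) : dot v (e l) = v l := by
  simp [dot, e, Pi.single_apply]

lemma q4305 : Real.sqrt 4305 * Real.sqrt 4305 = 4305 := Real.mul_self_sqrt (by norm_num)
lemma q111930 : Real.sqrt 111930 * Real.sqrt 111930 = 111930 := Real.mul_self_sqrt (by norm_num)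
lemma q22386 : Real.sqrt 22386 * Real.sqrt 22386 = 22386 := Real.mul_self_sqrt (by norm_num)
lemma q861 : Real.sqrt 861 * Real.sqrt 861 = 861 := Real.mul_self_sqrt (by norm_num)
lemma q902 : Real.sqrt 902 * Real.sqrt 902 = 902 := Real.mul_self_sqrt (by norm_num)
lemma q82 : Real.sqrt 82 * Real.sqrt 82 = 82 := Real.mul_self_sqrt (by norm_num)

lemma key : Real.sqrt 4305 * Real.sqrt 111930 = 5 * (Real.sqrt 22386 * Real.sqrt 861) := by
  rw [← Real.sqrt_mul (by norm_num), ← Real.sqrt_mul (by norm_num)]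
  rw [show (4305 : ℝ) * 111930 = 5 ^ 2 * (22386 * 861) by norm_num]
  rw [Real.sqrt_mul (by positivity), Real.sqrt_sq (by norm_num)]

lemma w0 : (![1,3,4,4,5,6,7] : Fin 7 → ℝ) 0 = 1 := rfl
lemma w1 : (![1,3,4,4,5,6,7] : Fin 7 → ℝ) 1 = 3 := rfl
lemma w2 : (![1,3,4,4,5,6,7] : Fin 7 → ℝ) 2 = 4 := rfl
lemma w3 : (![1,3,4,4,5,6,7] : Fin 7 → ℝ) 3 = 4 := rfl
lemma w4 : (![1,3,4,4,5,6,7] : Fin 7 → ℝ) 4 = 5 := rfl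
lemma w5 : (![1,3,4,4,5,6,7] : Fin 7 → ℝ) 5 = 6 := rfl
lemma w6 : (![1,3,4,4,5,6,7] : Fin 7 → ℝ) 6 = 7 := rfl
lemma t0 : (![-61/82, -31/82, -8/41, -8/41, -1/82, 7/41, 29/82] : Fin 7 → ℝ) 0 = -61/82 := rfl
lemma t1 : (![-61/82, -31/82, -8/41, -8/41, -1/82, 7/41, 29/82] : Fin 7 → ℝ) 1 = -31/82 := rfl
lemma t2 : (![-61/82, -31/82, -8/41, -8/41, -1/82, 7/41, 29/82] : Fin 7 → ℝ) 2 = -8/41 := rfl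
lemma t3 : (![-61/82, -31/82, -8/41, -8/41, -1/82, 7/41, 29/82] : Fin 7 → ℝ) 3 = -8/41 := rfl
lemma t4 : (![-61/82, -31/82, -8/41, -8/41, -1/82, 7/41, 29/82] : Fin 7 → ℝ) 4 = -1/82 := rfl
lemma t5 : (![-61/82, -31/82, -8/41, -8/41, -1/82, 7/41, 29/82] : Fin 7 → ℝ) 5 = 7/41 := rfl
lemma t6 : (![-61/82, -31/82, -8/41, -8/41, -1/82, 7/41, 29/82] : Fin 7 → ℝ) 6 = 29/82 := rfl

lemma AB : (-(38/41) : ℝ) • (1 : Module.End ℝ V7) + (15/82 : ℝ) • diagL ![1, 3, 4, 4, 5, 6, 7]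
    = diagL ![-61/82, -31/82, -8/41, -8/41, -1/82, 7/41, 29/82] := by
  apply LinearMap.ext; intro v; funext i
  fin_cases i <;>
    simp only [Fin.mk_zero, Fin.mk_one, Fin.reduceFinMk, LinearMap.add_apply,
      LinearMap.smul_apply, Module.End.one_apply, Pi.add_apply, Pi.smul_apply,
      smul_eq_mul, diagL_apply, w0, w1, w2, w3, w4, w5, w6,
      t0, t1, t2, t3, t4, t5, t6] <;> ring

set_option maxHeartbeats 2000000 in
lemma hAB : ∀ (m : Module.End ℝ V7),
      (∀ x y : V7, dot (m x) y =
          -2 * ∑ i, ∑ j, dot (br c14 x (e i)) (e j) * dot (br c14 y (e i)) (e j)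
          + ∑ i, ∑ j, dot (br c14 (e i) (e j)) x * dot (br c14 (e i) (e j)) y) →
      m = diagL ![-61/82, -31/82, -8/41, -8/41, -1/82, 7/41, 29/82] := by
  intro m hm
  have h : ∀ k l : Fin 7, m (e k) l =
      -2 * ∑ i, ∑ j, dot (br c14 (e k) (e i)) (e j) * dot (br c14 (e l) (e i)) (e j)
      + ∑ i, ∑ j, dot (br c14 (e i) (e j)) (e k) * dot (br c14 (e i) (e j)) (e l) := by
    intro k l
    rw [← dot_e (m (e k)) l]
    exact hm (e k) (e l)
  apply Module.Basis.ext (Pi.basisFun ℝ (Fin 7))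
  intro k
  rw [Pi.basisFun_apply]
  show m (e k) = _
  funext l
  fin_cases k <;> fin_cases l <;> rw [h] <;>
    simp only [Fin.mk_zero, Fin.mk_one, Fin.reduceFinMk, dot_e, Fin.sum_univ_seven,
      b0, b1, b2, b3, b4, b5, b6, diagL_apply, t0, t1, t2, t3, t4, t5, t6] <;>
    simp [e, Pi.single_apply] <;> (try ring_nf) <;> (try norm_num) <;>
    (try linarith [q4305, q111930, q22386, q861, q902, q82, key])

/-- The bracket satisfies the Jacobi identity (and is skew-symmetric),
`D` is a derivation of it, and the unnormalized moment map `m(μ̃)` — i.e. the endomorphism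
`m` of `ℝ⁷` determined by
`⟨m x, y⟩ = -2 ∑ᵢⱼ ⟨μ̃(x,eᵢ),eⱼ⟩⟨μ̃(y,eᵢ),eⱼ⟩ + ∑ᵢⱼ ⟨μ̃(eᵢ,eⱼ),x⟩⟨μ̃(eᵢ,eⱼ),y⟩` —
equals `-(38/41) • Id + 15/82 • D`, which is the indicated diagonal map. -/
theorem stmt :
    Skew c14 ∧ Jacobi c14 ∧
    diagL ![1, 3, 4, 4, 5, 6, 7] ∈ derivations c14 ∧
    ∀ m : Module.End ℝ V7,
      (∀ x y : V7, dot (m x) y =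
          -2 * ∑ i, ∑ j, dot (br c14 x (e i)) (e j) * dot (br c14 y (e i)) (e j)
          + ∑ i, ∑ j, dot (br c14 (e i) (e j)) x * dot (br c14 (e i) (e j)) y) →
      m = (-(38/41) : ℝ) • (1 : Module.End ℝ V7) + (15/82 : ℝ) • diagL ![1, 3, 4, 4, 5, 6, 7]
      ∧ m = diagL ![-61/82, -31/82, -8/41, -8/41, -1/82, 7/41, 29/82] := by
  refine ⟨skew14, jac14, deriv14, fun m hm => ?_⟩
  have hmain := hAB m hm
  exact ⟨by rw [AB]; exact hmain, hmain⟩
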